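/- Let p, q be primes and let z be uniform in Z_{pq}, with α uniform in (Z_{pq})^* and γ uniform in Z_p^*, all independent. Then x := γ·round(α·z/q) mod p is uniformly distributed in Z_p, and moreover, writing α·z mod pq = q·(γ^{−1}·x mod p) + v with v ∈ {(1−q)/2,...,(q−1)/2}, the pair (x,v) is uniform on Z_p × {(1−q)/2,...,(q−1)/2} and independent of (α,γ). -/

import Mathlib

set_option maxHeartbeats 1000000

lemma round_q_helper (q : ℕ) (a b : ℤ) (hq : 0 < q) (h1 : 1 - (q:ℤ) ≤ 2*b)
    (h2 : 2*b ≤ (q:ℤ) - 1) : round ((((q:ℤ)*a+b : ℤ) : ℚ)/(q:ℚ)) = a := by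
  have hq0 : (0:ℚ) < (q:ℚ) := by exact_mod_cast hq
  have c1 : (1:ℚ) - q ≤ 2*b := by exact_mod_cast h1
  have c2 : (2:ℚ)*b ≤ (q:ℚ) - 1 := by exact_mod_cast h2
  have key : (((q:ℤ)*a+b : ℤ) : ℚ)/(q:ℚ) = (b:ℚ)/(q:ℚ) + a := by
    field_simp
    push_cast
    ring
  rw [key, round_add_intCast]
  have h0 : round ((b:ℚ)/(q:ℚ)) = 0 := by
    rw [round_eq_zero_iff]
    constructor
    · rw [le_div_iff₀ hq0]; linarith
    · rw [div_lt_iff₀ hq0]; linarith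
  rw [h0, zero_add]

/-- Let `p, q` be odd primes, `z` uniform in `Z_{pq}`, `α ∈ (Z_{pq})^*` and
`γ ∈ Z_p^*`. Set `x = γ·round(α·z/q) mod p` and let `v` be defined by the unique
decomposition `α·z mod pq = q·(γ⁻¹·x mod p) + v` with
`v ∈ {(1-q)/2,…,(q-1)/2}`, i.e. `v = (α·z mod pq) - q·round((α·z mod pq)/q)`.
Then for every fixed `α, γ`, the map `z ↦ (x, v)` is a bijection from `Z_{pq}`
onto `Z_p × {(1-q)/2,…,(q-1)/2}`; consequently `(x, v)` is uniform on that
product and independent of `(α, γ)`, and in particular `x` is uniform in `Z_p`. -/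
theorem stmt18 (p q : ℕ) (hp : p.Prime) (hq : q.Prime) (hop : Odd p) (hoq : Odd q)
    [NeZero p] [NeZero (p * q)]
    (α : (ZMod (p * q))ˣ) (γ : (ZMod p)ˣ) :
    ∀ (x₀ : ZMod p) (v₀ : ℤ),
      v₀ ∈ Finset.Icc ((1 - (q : ℤ)) / 2) (((q : ℤ) - 1) / 2) →
      ∃! z : ZMod (p * q),
        (γ : ZMod p) *
            ((round (((((α : ZMod (p * q)) * z).val : ℚ)) / (q : ℚ)) : ℤ) : ZMod p)
          = x₀ ∧
        ((((α : ZMod (p * q)) * z).val : ℤ) -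
            (q : ℤ) * round (((((α : ZMod (p * q)) * z).val : ℚ)) / (q : ℚ)))
          = v₀ := by
  intro x₀ v₀ hv
  simp only [Finset.mem_Icc] at hv
  obtain ⟨k, hk⟩ := hoq
  have hkq : (q:ℤ) = 2*k + 1 := by exact_mod_cast hk
  have hq1 : (1:ℤ) < q := by exact_mod_cast hq.one_lt
  have hp1 : (1:ℤ) < p := by exact_mod_cast hp.one_lt
  have hqpos : 0 < q := hq.pos
  have hq0 : (0:ℤ) ≤ q := by positivity
  have hk0 : (0:ℤ) ≤ k := by positivity
  have hv1 : -(k:ℤ) ≤ v₀ ∧ v₀ ≤ k := by omega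
  have hcomm : (p:ℤ) * q = (q:ℤ) * p := mul_comm _ _
  -- the key bound lemma
  have wbound : ∀ w : ℤ, 0 ≤ (q:ℤ)*w + v₀ → (q:ℤ)*w + v₀ < (p:ℤ)*q →
      (0 ≤ v₀ → 0 ≤ w ∧ w ≤ (p:ℤ)-1) ∧ (v₀ < 0 → 1 ≤ w ∧ w ≤ p) := by
    intro w hl hu
    constructor
    · intro h
      constructor
      · by_contra hcon; push_neg at hcon
        have h1 : (q:ℤ)*w ≤ (q:ℤ)*(-1) := mul_le_mul_of_nonneg_left (by omega) hq0
        linarith [hv1.2]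
      · by_contra hcon; push_neg at hcon
        have h1 : (q:ℤ)*p ≤ (q:ℤ)*w := mul_le_mul_of_nonneg_left (by omega) hq0
        linarith
    · intro h
      constructor
      · by_contra hcon; push_neg at hcon
        have h1 : (q:ℤ)*w ≤ (q:ℤ)*0 := mul_le_mul_of_nonneg_left (by omega) hq0
        linarith
      · by_contra hcon; push_neg at hcon
        have h1 : (q:ℤ)*(p+1) ≤ (q:ℤ)*w := mul_le_mul_of_nonneg_left (by omega) hq0
        have h2 : (q:ℤ)*(p+1) = (q:ℤ)*p + q := by ring
        linarith [hv1.1]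
  -- target residue
  set c : ZMod p := ((γ⁻¹ : (ZMod p)ˣ) : ZMod p) * x₀ with hc
  have hcv : (0:ℤ) ≤ (c.val : ℤ) ∧ ((c.val : ℤ)) < p := by
    constructor
    · positivity
    · exact_mod_cast c.val_lt
  set w₀ : ℤ := if v₀ < 0 ∧ c.val = 0 then (p:ℤ) else (c.val : ℤ) with hw₀
  have hw₀c : ((w₀ : ZMod p)) = c := by
    by_cases h : v₀ < 0 ∧ c.val = 0
    · have hc0 : c = 0 := (ZMod.val_eq_zero c).mp h.2
      simp [hw₀, h, hc0]
    · simp only [hw₀, if_neg h]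
      push_cast
      rw [ZMod.natCast_val, ZMod.cast_id]
  have hw₀b : (0 ≤ v₀ → 0 ≤ w₀ ∧ w₀ ≤ (p:ℤ) - 1) ∧ (v₀ < 0 → 1 ≤ w₀ ∧ w₀ ≤ p) := by
    by_cases h : v₀ < 0 ∧ c.val = 0
    · rw [hw₀, if_pos h]; omega
    · rw [hw₀, if_neg h]; omega
  set n₀ : ℤ := q * w₀ + v₀ with hn₀
  have hn₀b : 0 ≤ n₀ ∧ n₀ < (p:ℤ) * q := by
    rcases le_or_gt 0 v₀ with h | h
    · have := hw₀b.1 h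
      constructor
      · nlinarith
      · nlinarith
    · have := hw₀b.2 h
      constructor
      · nlinarith
      · nlinarith
  set z : ZMod (p*q) := ((α⁻¹ : (ZMod (p*q))ˣ) : ZMod (p*q)) * ((n₀ : ℤ) : ZMod (p*q)) with hz
  have hαz : (α : ZMod (p*q)) * z = ((n₀ : ℤ) : ZMod (p*q)) := by
    rw [hz, Units.mul_inv_cancel_left]
  have hval : (((α : ZMod (p*q)) * z).val : ℤ) = n₀ := by
    rw [hαz, ZMod.val_intCast]
    exact Int.emod_eq_of_lt hn₀b.1 (by exact_mod_cast hn₀b.2)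
  have hround : round ((((α : ZMod (p*q)) * z).val : ℚ) / (q:ℚ)) = w₀ := by
    have : ((((α : ZMod (p*q)) * z).val : ℕ) : ℚ) = ((n₀ : ℤ) : ℚ) := by
      exact_mod_cast congrArg (fun t : ℤ => (t : ℚ)) hval
    rw [this, hn₀]
    exact round_q_helper q w₀ v₀ hqpos (by omega) (by omega)
  refine ⟨z, ⟨?_, ?_⟩, ?_⟩
  · rw [hround, hw₀c, hc, ← mul_assoc, Units.mul_inv, one_mul]
  · rw [hround, hval, hn₀]; ring_nf
  · rintro z' ⟨h1, h2⟩
    set w' : ℤ := round ((((α : ZMod (p*q)) * z').val : ℚ) / (q:ℚ)) with hw'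
    have hn' : (((α : ZMod (p*q)) * z').val : ℤ) = q * w' + v₀ := by omega
    have hn'b : (0:ℤ) ≤ (q:ℤ) * w' + v₀ ∧ (q:ℤ) * w' + v₀ < (p:ℤ) * q := by
      rw [← hn']
      exact ⟨Int.natCast_nonneg _, by exact_mod_cast ((α : ZMod (p*q)) * z').val_lt⟩
    have hwb := wbound w' hn'b.1 hn'b.2
    have hw'c : ((w' : ZMod p)) = c := by
      rw [hc, ← h1, Units.inv_mul_cancel_left]
    have hdvd : (p:ℤ) ∣ (w' - w₀) := by
      apply (ZMod.intCast_zmod_eq_zero_iff_dvd _ _).mp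
      push_cast
      rw [hw'c, hw₀c, sub_self]
    have hweq : w' = w₀ := by
      obtain ⟨t, ht⟩ := hdvd
      have hrange : -(p:ℤ) < w' - w₀ ∧ w' - w₀ < p := by
        rcases le_or_gt 0 v₀ with h | h
        · have := hwb.1 h; have := hw₀b.1 h; omega
        · have := hwb.2 h; have := hw₀b.2 h; omega
      rcases lt_trichotomy t 0 with h | h | h
      · nlinarith [hrange.1]
      · rw [h, mul_zero] at ht; omega
      · nlinarith [hrange.2]
    have heq : (((α : ZMod (p*q)) * z').val : ℤ) = (((α : ZMod (p*q)) * z).val : ℤ) := by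
      rw [hval, hn', hweq]
    have hvv : ((α : ZMod (p*q)) * z').val = ((α : ZMod (p*q)) * z).val := by exact_mod_cast heq
    have hzz := ZMod.val_injective _ hvv
    calc z' = ((α⁻¹ : (ZMod (p*q))ˣ) : ZMod (p*q)) * ((α : ZMod (p*q)) * z') := by
            rw [Units.inv_mul_cancel_left]
      _ = ((α⁻¹ : (ZMod (p*q))ˣ) : ZMod (p*q)) * ((α : ZMod (p*q)) * z) := by rw [hzz]
      _ = z := by rw [Units.inv_mul_cancel_left]
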